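/- Let n be a positive integer, a = (a_1,...,a_n) and b = (b_1,...,b_n) be n-tuples of complex numbers with b_k ≠ 0 for all k, and p = (p_1,...,p_n) nonnegative real weights with ∑_{i=1}^n p_i = 1. Let γ, Γ ∈ ℂ satisfy Re(Γ · conj(γ)) > 0 and Γ ≠ γ, and suppose |a_k/conj(b_k) - (γ + Γ)/2| ≤ (1/2)|Γ - γ| for every k ∈ {1,...,n}. Then (∑_{k=1}^n p_k |a_k|^2)(∑_{k=1}^n p_k |b_k|^2) - | ∑_{k=1}^n p_k a_k b_k |^2 ≤ (|Γ - γ|^2/(4 Re(Γ conj(γ)))) · | ∑_{k=1}^n p_k a_k b_k |^2. -/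

import Mathlib

open Complex

lemma key_pt (a b γ Γ : ℂ) (hb : b ≠ 0)
    (h : ‖a / (starRingEnd ℂ) b - (γ + Γ) / 2‖
        ≤ (1 / 2) * ‖Γ - γ‖) :
    ‖a‖ ^ 2 + (Γ * (starRingEnd ℂ) γ).re * ‖b‖ ^ 2
      ≤ (a * b * (starRingEnd ℂ) (γ + Γ)).re := by
  have hcb : (starRingEnd ℂ) b ≠ 0 := by simpa using hb
  have he : 2 * a - (γ + Γ) * (starRingEnd ℂ) b
      = (a / (starRingEnd ℂ) b - (γ + Γ) / 2) * (2 * (starRingEnd ℂ) b) := by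
    field_simp
  have h1 : ‖2 * a - (γ + Γ) * (starRingEnd ℂ) b‖
      ≤ ‖Γ - γ‖ * ‖b‖ := by
    rw [he, norm_mul, norm_mul]
    simp only [Complex.norm_two, Complex.norm_conj]
    calc ‖a / (starRingEnd ℂ) b - (γ + Γ) / 2‖ * (2 * ‖b‖)
        ≤ (1 / 2) * ‖Γ - γ‖ * (2 * ‖b‖) := by
          apply mul_le_mul_of_nonneg_right h
          positivity
      _ = ‖Γ - γ‖ * ‖b‖ := by ring
  have h2 : Complex.normSq (2 * a - (γ + Γ) * (starRingEnd ℂ) b)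
      ≤ Complex.normSq (Γ - γ) * Complex.normSq b := by
    have := mul_le_mul h1 h1 (norm_nonneg _) (by positivity)
    calc Complex.normSq (2 * a - (γ + Γ) * (starRingEnd ℂ) b)
        = ‖2 * a - (γ + Γ) * (starRingEnd ℂ) b‖
          * ‖2 * a - (γ + Γ) * (starRingEnd ℂ) b‖ := by
          rw [← Complex.sq_norm]; ring
      _ ≤ (‖Γ - γ‖ * ‖b‖) * (‖Γ - γ‖ * ‖b‖) := this
      _ = Complex.normSq (Γ - γ) * Complex.normSq b := by
          rw [← Complex.sq_norm, ← Complex.sq_norm]; ring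
  have hid : (a * b * (starRingEnd ℂ) (γ + Γ)).re
      - ‖a‖ ^ 2 - (Γ * (starRingEnd ℂ) γ).re * ‖b‖ ^ 2
      = (Complex.normSq (Γ - γ) * Complex.normSq b
        - Complex.normSq (2 * a - (γ + Γ) * (starRingEnd ℂ) b)) / 4 := by
    rw [Complex.sq_norm, Complex.sq_norm]
    simp only [Complex.normSq_apply, Complex.mul_re, Complex.mul_im, Complex.add_re,
      Complex.add_im, Complex.sub_re, Complex.sub_im, Complex.conj_re, Complex.conj_im,
      Complex.ofReal_re, Complex.ofReal_im, Complex.re_ofNat, Complex.im_ofNat]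
    ring
  linarith

theorem stmt_8 (n : ℕ) (hn : 0 < n) (a b : Fin n → ℂ) (p : Fin n → ℝ)
    (hb : ∀ k, b k ≠ 0) (hp : ∀ k, 0 ≤ p k) (hp1 : ∑ i, p i = 1)
    (γ Γ : ℂ) (hΓγ : 0 < (Γ * (starRingEnd ℂ) γ).re) (hne : Γ ≠ γ)
    (h : ∀ k, ‖a k / (starRingEnd ℂ) (b k) - (γ + Γ) / 2‖
        ≤ (1 / 2) * ‖Γ - γ‖) :
    (∑ k, p k * ‖a k‖ ^ 2) * (∑ k, p k * ‖b k‖ ^ 2)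
        - ‖∑ k, (p k : ℂ) * a k * b k‖ ^ 2
      ≤ (‖Γ - γ‖ ^ 2 / (4 * (Γ * (starRingEnd ℂ) γ).re))
        * ‖∑ k, (p k : ℂ) * a k * b k‖ ^ 2 := by
  set r := (Γ * (starRingEnd ℂ) γ).re with hr
  set A := ∑ k, p k * ‖a k‖ ^ 2 with hA
  set B := ∑ k, p k * ‖b k‖ ^ 2 with hB
  set z := ∑ k, (p k : ℂ) * a k * b k with hz
  have hA0 : 0 ≤ A := Finset.sum_nonneg fun k _ => mul_nonneg (hp k) (by positivity)
  have hB0 : 0 ≤ B := Finset.sum_nonneg fun k _ => mul_nonneg (hp k) (by positivity)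
  -- summed inequality
  have hsum : A + r * B ≤ (z * (starRingEnd ℂ) (γ + Γ)).re := by
    have : (z * (starRingEnd ℂ) (γ + Γ)).re
        = ∑ k, p k * ((a k * b k * (starRingEnd ℂ) (γ + Γ)).re) := by
      rw [hz, Finset.sum_mul, Complex.re_sum]
      apply Finset.sum_congr rfl
      intro k _
      rw [show (p k : ℂ) * a k * b k * (starRingEnd ℂ) (γ + Γ)
          = (p k : ℂ) * (a k * b k * (starRingEnd ℂ) (γ + Γ)) by ring]
      simp [Complex.re_ofReal_mul]
    rw [this, hA, hB, Finset.mul_sum, ← Finset.sum_add_distrib]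
    apply Finset.sum_le_sum
    intro k _
    have := key_pt (a k) (b k) γ Γ (hb k) (h k)
    have hpk := hp k
    nlinarith
  have hre : (z * (starRingEnd ℂ) (γ + Γ)).re ≤ ‖z‖ * ‖γ + Γ‖ := by
    calc (z * (starRingEnd ℂ) (γ + Γ)).re ≤ ‖z * (starRingEnd ℂ) (γ + Γ)‖ :=
          Complex.re_le_norm _
      _ = ‖z‖ * ‖γ + Γ‖ := by rw [norm_mul, Complex.norm_conj]
  have hpar : ‖γ + Γ‖ ^ 2 = ‖Γ - γ‖ ^ 2 + 4 * r := by
    rw [Complex.sq_norm, Complex.sq_norm, hr]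
    simp only [Complex.normSq_apply, Complex.mul_re, Complex.add_re, Complex.add_im,
      Complex.sub_re, Complex.sub_im, Complex.conj_re, Complex.conj_im]
    ring
  have hzΓ : 0 ≤ ‖z‖ * ‖γ + Γ‖ := by positivity
  have h4 : 4 * r * (A * B) ≤ ‖z‖ ^ 2 * (‖Γ - γ‖ ^ 2 + 4 * r) := by
    have h5 : (A + r * B) ^ 2 ≤ (‖z‖ * ‖γ + Γ‖) ^ 2 := by
      have hL : 0 ≤ A + r * B := by positivity
      nlinarith [le_trans hsum hre]
    nlinarith [sq_nonneg (A - r * B), hpar]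
  rw [div_mul_eq_mul_div, le_div_iff₀ (show (0:ℝ) < 4 * r by positivity)]
  nlinarith
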